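/- Let G be a finite simple graph and let ≺ be a linear ordering of its vertices satisfying the LexBFS property: for all vertices a, b, c with c ≺ b ≺ a, c adjacent to a, and c not adjacent to b, there exists a vertex d with d ≺ c, d adjacent to b, and d not adjacent to a. Let z be the last vertex in the ordering. Then for all vertices a, b, c with c ≺ b ≺ a and c adjacent to a, there exists a path in G from b to c all of whose internal vertices lie outside the closed neighborhood N[z] of z. -/
import Mathlib


/-- In a finite simple graph with a LexBFS ordering (given by a linear
order on the vertices satisfying the Brandstädt–Dragan–Nicolai exchange property),
with last vertex `z`, for all vertices `c ≺ b ≺ a` with `c` adjacent to `a`, there is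
a path from `b` to `c` whose internal vertices all lie outside `N[z]`. -/
theorem stmt_0 {V : Type*} [Fintype V] [LinearOrder V] (G : SimpleGraph V)
    (hlex : ∀ a b c : V, c < b → b < a → G.Adj c a → ¬ G.Adj c b →
      ∃ d : V, d < c ∧ G.Adj d b ∧ ¬ G.Adj d a)
    (z : V) (hz : ∀ w : V, w ≤ z) :
    ∀ a b c : V, c < b → b < a → G.Adj c a →
      ∃ p : G.Walk b c, p.IsPath ∧
        ∀ w ∈ p.support, w ≠ b → w ≠ c → ¬ (w = z ∨ G.Adj z w) := by
  have wf : WellFounded ((· < ·) : V → V → Prop) := IsWellFounded.wf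
  suffices key : ∀ c a b : V, c < b → b < a → G.Adj c a →
      ∃ p : G.Walk b c, p.IsPath ∧
        ∀ w ∈ p.support, w ≠ b → w ≠ c → ¬ (w = z ∨ G.Adj z w) by
    exact fun a b c h1 h2 h3 => key c a b h1 h2 h3
  intro c
  induction c using WellFounded.induction wf with
  | _ c IH =>
  intro a b hcb hba hca
  by_cases hadjcb : G.Adj c b
  · refine ⟨SimpleGraph.Walk.cons hadjcb.symm SimpleGraph.Walk.nil, ?_, ?_⟩
    · simp [SimpleGraph.Walk.isPath_def, hadjcb.ne']
    · intro w hw hwb hwc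
      simp only [SimpleGraph.Walk.support_cons, SimpleGraph.Walk.support_nil,
        List.mem_cons, List.mem_singleton] at hw
      rcases hw with h | h | h
      · exact absurd h hwb
      · exact absurd h hwc
      · exact absurd h (by simp)
  · obtain ⟨d, hdc, hdb, hda⟩ := hlex a b c hcb hba hca hadjcb
    by_cases hzd : G.Adj z d
    · -- then a ≠ z, apply hlex to (z, a, d) to get e
      have haz : a < z := by
        rcases lt_or_eq_of_le (hz a) with h | h
        · exact h
        · exact absurd (h ▸ hzd.symm : G.Adj d a) hda
      obtain ⟨e, hed, hea, hez⟩ := hlex z a d (hdc.trans (hcb.trans hba)) haz hzd.symm hda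
      have hec : e < c := hed.trans hdc
      obtain ⟨p1, hp1, hp1i⟩ := IH e hec a b (hec.trans hcb) hba hea
      obtain ⟨p2, hp2, hp2i⟩ := IH e hec a c hec (hcb.trans hba) hea
      have heNz : ¬ (e = z ∨ G.Adj z e) := by
        rintro (rfl | h)
        · exact absurd (haz.trans (hed.trans (hdc.trans (hcb.trans hba)))) (lt_irrefl a)
        · exact hez h.symm
      refine ⟨(p1.append p2.reverse).bypass, SimpleGraph.Walk.bypass_isPath _, ?_⟩
      intro w hw hwb hwc
      have hw' := SimpleGraph.Walk.support_bypass_subset _ hw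
      rw [SimpleGraph.Walk.mem_support_append_iff] at hw'
      rcases hw' with h | h
      · by_cases hwe : w = e
        · exact hwe ▸ heNz
        · exact hp1i w h hwb hwe
      · rw [SimpleGraph.Walk.support_reverse, List.mem_reverse] at h
        by_cases hwe : w = e
        · exact hwe ▸ heNz
        · exact hp2i w h hwc hwe
    · -- d ∉ N[z]; use IH on (b, c, d)
      obtain ⟨p, hp, hpi⟩ := IH d hdc b c hdc hcb hdb
      have hdNz : ¬ (d = z ∨ G.Adj z d) := by
        rintro (rfl | h)
        · exact absurd (hz a) (not_le.mpr ((hdc.trans hcb).trans hba))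
        · exact hzd h
      refine ⟨(SimpleGraph.Walk.cons hdb.symm p.reverse).bypass,
        SimpleGraph.Walk.bypass_isPath _, ?_⟩
      intro w hw hwb hwc
      have hw' := SimpleGraph.Walk.support_bypass_subset _ hw
      rw [SimpleGraph.Walk.support_cons, List.mem_cons] at hw'
      rcases hw' with h | h
      · exact absurd h hwb
      · rw [SimpleGraph.Walk.support_reverse, List.mem_reverse] at h
        by_cases hwd : w = d
        · exact hwd ▸ hdNz
        · exact hpi w h hwc hwd
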